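/- arXiv:2005.06233 — 2 statements merged into one kernel-verified Lean document; each statement's English description precedes it below -/
import Mathlib

section
/- Let (Ω, F, P) be a complete probability space and f: Ω × ℝⁿ → ℝ a random function (f(·, x) measurable for each x) such that x ↦ f(ω, x) is twice continuously differentiable for each ω. If there exists some map ξ: Ω → ℝⁿ with g(ω, ξ(ω)) = 0 and H(ω, ξ(ω)) positive definite for all ω, then there exists a measurable ψ: Ω → ℝⁿ such that for every ω, ψ(ω) is a strict local minimizer of f(ω, ·): there is δ(ω) > 0 with f(ω, ψ(ω)) < f(ω, x) for all x ≠ ψ(ω) with ‖x − ψ(ω)‖ < δ(ω). -/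
open MeasureTheory Metric Set Filter Topology



lemma aux_strict_local_min {n : ℕ} (f : EuclideanSpace ℝ (Fin n) → ℝ)
    (hf : ContDiff ℝ 2 f) (x₀ : EuclideanSpace ℝ (Fin n))
    (hg : fderiv ℝ f x₀ = 0)
    (hH : ∀ v : EuclideanSpace ℝ (Fin n), v ≠ 0 → 0 < iteratedFDeriv ℝ 2 f x₀ ![v, v]) :
    ∃ ρ > 0, ∀ x, x ≠ x₀ → ‖x - x₀‖ ≤ ρ → f x₀ < f x := by
  have veq : ∀ v : EuclideanSpace ℝ (Fin n), ![v, v] = fun _ : Fin 2 => v := by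
    intro v; funext i; fin_cases i <;> rfl
  -- continuity of the Hessian quadratic form
  have h1 : Continuous (iteratedFDeriv ℝ 2 f) :=
    hf.continuous_iteratedFDeriv (mod_cast le_rfl)
  have hQc : Continuous (fun p : EuclideanSpace ℝ (Fin n) × EuclideanSpace ℝ (Fin n) => iteratedFDeriv ℝ 2 f p.1 ![p.2, p.2]) := by
    simp only [veq]
    exact (h1.comp continuous_fst).eval (continuous_pi fun _ => continuous_snd)
  -- tube lemma around {x₀} × sphere
  obtain ⟨u, v, huo, hvo, hxu, hsv, huv⟩ :=
    generalized_tube_lemma (isCompact_singleton : IsCompact {x₀}) (isCompact_sphere (0 : EuclideanSpace ℝ (Fin n)) 1)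
      (hQc.isOpen_preimage (Ioi 0) isOpen_Ioi)
      (by
        rintro ⟨y, w⟩ ⟨hy, hw⟩
        simp only [mem_singleton_iff] at hy
        subst hy
        exact hH w (by simpa using ne_of_mem_sphere hw one_ne_zero))
  obtain ⟨ε, hε, hball⟩ := Metric.isOpen_iff.1 huo x₀ (hxu rfl)
  refine ⟨ε / 2, by linarith, ?_⟩
  have hpos : ∀ y ∈ closedBall x₀ (ε / 2), ∀ h : EuclideanSpace ℝ (Fin n), h ≠ 0 →
      0 < iteratedFDeriv ℝ 2 f y ![h, h] := by
    intro y hy h hh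
    have hyu : y ∈ u := hball (lt_of_le_of_lt (mem_closedBall.1 hy) (by linarith))
    have hnorm : ‖h‖ ≠ 0 := norm_ne_zero_iff.2 hh
    have hunit : (‖h‖⁻¹ • h) ∈ sphere (0 : EuclideanSpace ℝ (Fin n)) 1 := by
      simp [norm_smul, abs_of_nonneg (inv_nonneg.2 (norm_nonneg h)),
        inv_mul_cancel₀ hnorm]
    have hmem : (y, ‖h‖⁻¹ • h) ∈ u ×ˢ v := ⟨hyu, hsv hunit⟩
    have hQpos : 0 < iteratedFDeriv ℝ 2 f y ![‖h‖⁻¹ • h, ‖h‖⁻¹ • h] := huv hmem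
    have hscale : iteratedFDeriv ℝ 2 f y ![h, h]
        = (‖h‖ * ‖h‖) • iteratedFDeriv ℝ 2 f y ![‖h‖⁻¹ • h, ‖h‖⁻¹ • h] := by
      rw [veq, veq]
      have := (iteratedFDeriv ℝ 2 f y).map_smul_univ (fun _ : Fin 2 => ‖h‖)
        (fun _ : Fin 2 => ‖h‖⁻¹ • h)
      simp only [smul_smul, mul_inv_cancel₀ hnorm, one_smul] at this
      rw [this]
      rw [Fin.prod_univ_two]
    rw [hscale]
    positivity
  -- 1D reduction
  intro x hx hxd
  set h : EuclideanSpace ℝ (Fin n) := x - x₀ with hh_def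
  have hh : h ≠ 0 := sub_ne_zero.2 hx
  set L : ℝ → EuclideanSpace ℝ (Fin n) := fun t => x₀ + t • h with hL_def
  have hLd : ∀ t : ℝ, HasDerivAt L h t := by
    intro t
    have := ((hasDerivAt_id t).smul_const h).const_add x₀
    rw [one_smul] at this
    exact this
  set φ : ℝ → ℝ := fun t => f (L t) with hφ_def
  set φ₁ : ℝ → ℝ := fun t => fderiv ℝ f (L t) h with hφ₁_def
  have hfd : Differentiable ℝ f := hf.differentiable (by norm_num)
  have hφd : ∀ t : ℝ, HasDerivAt φ (φ₁ t) t := by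
    intro t
    exact (hfd (L t)).hasFDerivAt.comp_hasDerivAt t (hLd t)
  have hg1 : ContDiff ℝ 1 (fderiv ℝ f) := hf.fderiv_right (by norm_num)
  have hφ₁d : ∀ t : ℝ, HasDerivAt φ₁ (fderiv ℝ (fderiv ℝ f) (L t) h h) t := by
    intro t
    have hc : HasFDerivAt (fun y : EuclideanSpace ℝ (Fin n) => fderiv ℝ f y h)
        ((fderiv ℝ (fderiv ℝ f) (L t)).flip h) (L t) := by
      have h2 : HasFDerivAt (fderiv ℝ f) (fderiv ℝ (fderiv ℝ f) (L t)) (L t) :=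
        (hg1.differentiable one_ne_zero (L t)).hasFDerivAt
      have := h2.clm_apply (hasFDerivAt_const h (L t))
      simpa using this
    have := hc.comp_hasDerivAt t (hLd t)
    simp only [ContinuousLinearMap.flip_apply] at this
    exact this
  have hQt : ∀ t : ℝ, fderiv ℝ (fderiv ℝ f) (L t) h h
      = iteratedFDeriv ℝ 2 f (L t) ![h, h] := by
    intro t
    rw [iteratedFDeriv_two_apply]
    simp
  have hLmem : ∀ t ∈ Icc (0:ℝ) 1, L t ∈ closedBall x₀ (ε / 2) := by
    intro t ht
    simp only [hL_def, mem_closedBall, dist_eq_norm, add_sub_cancel_left]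
    rw [norm_smul, Real.norm_eq_abs, abs_of_nonneg ht.1]
    calc t * ‖h‖ ≤ 1 * ‖h‖ := by
          apply mul_le_mul_of_nonneg_right ht.2 (norm_nonneg h)
      _ = ‖h‖ := one_mul _
      _ ≤ ε / 2 := hxd
  -- φ₁ is strictly monotone on [0,1]
  have hφ₁mono : StrictMonoOn φ₁ (Icc 0 1) := by
    apply strictMonoOn_of_deriv_pos (convex_Icc 0 1)
    · exact fun t _ => ((hφ₁d t).continuousAt).continuousWithinAt
    · intro t ht
      rw [interior_Icc] at ht
      rw [(hφ₁d t).deriv, hQt t]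
      exact hpos (L t) (hLmem t ⟨le_of_lt ht.1, le_of_lt ht.2⟩) h hh
  have hφ₁0 : φ₁ 0 = 0 := by
    simp only [hφ₁_def, hL_def]
    simp [hg]
  have hφ₁pos : ∀ t ∈ Ioo (0:ℝ) 1, 0 < φ₁ t := by
    intro t ht
    have := hφ₁mono (left_mem_Icc.2 zero_le_one) ⟨le_of_lt ht.1, le_of_lt ht.2⟩ ht.1
    rwa [hφ₁0] at this
  have hφmono : StrictMonoOn φ (Icc 0 1) := by
    apply strictMonoOn_of_deriv_pos (convex_Icc 0 1)
    · exact fun t _ => ((hφd t).continuousAt).continuousWithinAt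
    · intro t ht
      rw [interior_Icc] at ht
      rw [(hφd t).deriv]
      exact hφ₁pos t ht
  have := hφmono (left_mem_Icc.2 zero_le_one) (right_mem_Icc.2 zero_le_one) zero_lt_one
  simpa [hφ_def, hL_def, hh_def] using this


lemma aux_measurable_ciInf {Ω : Type*} [MeasurableSpace Ω] {ι : Type*} [Countable ι] [Nonempty ι]
    (g : ι → Ω → ℝ) (hg : ∀ i, Measurable (g i))
    (hbdd : ∀ ω, BddBelow (Set.range fun i => g i ω)) :
    Measurable (fun ω => ⨅ i, g i ω) := by
  apply measurable_of_Iio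
  intro t
  have hset : (fun ω => ⨅ i, g i ω) ⁻¹' (Set.Iio t) = ⋃ i, {ω | g i ω < t} := by
    ext ω
    simp only [Set.mem_preimage, Set.mem_Iio, Set.mem_iUnion, Set.mem_setOf_eq]
    constructor
    · exact fun h => exists_lt_of_ciInf_lt h
    · rintro ⟨i, hi⟩; exact lt_of_le_of_lt (ciInf_le (hbdd ω) i) hi
  rw [hset]
  exact MeasurableSet.iUnion fun i => measurableSet_lt (hg i) measurable_const

lemma aux_isLeast {n : ℕ} (e : ℕ → EuclideanSpace ℝ (Fin n)) (he : DenseRange e)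
    (F : EuclideanSpace ℝ (Fin n) → ℝ) (hF : Continuous F)
    (U : Set (EuclideanSpace ℝ (Fin n))) (hU : IsOpen U) (hne : U.Nonempty)
    (hb : Bornology.IsBounded U) :
    IsLeast (F '' closure U) (⨅ i : {i // e i ∈ U}, F (e i)) := by
  have hK : IsCompact (closure U) := hb.isCompact_closure
  have hKne : (closure U).Nonempty := hne.mono subset_closure
  obtain ⟨z, hzK, hz⟩ := hK.exists_isMinOn hKne hF.continuousOn
  haveI hNe : Nonempty {i // e i ∈ U} := by
    obtain ⟨i, hi⟩ := he.exists_mem_open hU hne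
    exact ⟨⟨i, hi⟩⟩
  have hbdd : BddBelow (Set.range fun i : {i // e i ∈ U} => F (e i)) := by
    refine ⟨F z, ?_⟩
    rintro _ ⟨i, rfl⟩
    exact hz (subset_closure i.2)
  have heq : (⨅ i : {i // e i ∈ U}, F (e i)) = F z := by
    apply le_antisymm
    · apply le_of_forall_pos_le_add
      intro ε hε
      have hV : IsOpen (U ∩ F ⁻¹' Iio (F z + ε)) :=
        hU.inter (hF.isOpen_preimage _ isOpen_Iio)
      have hVz : (U ∩ F ⁻¹' Iio (F z + ε)).Nonempty := by
        have := mem_closure_iff.1 hzK (F ⁻¹' Iio (F z + ε))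
          (hF.isOpen_preimage _ isOpen_Iio) (by simp [hε])
        obtain ⟨w, hw1, hw2⟩ := this
        exact ⟨w, hw2, hw1⟩
      obtain ⟨i, hiU, hiV⟩ := he.exists_mem_open hV hVz
      exact le_of_lt (lt_of_le_of_lt (ciInf_le hbdd ⟨i, hiU⟩) hiV)
    · exact le_ciInf fun i => hz (subset_closure i.2)
  constructor
  · exact ⟨z, hzK, heq.symm⟩
  · rintro _ ⟨x, hx, rfl⟩
    rw [heq]
    exact hz hx


noncomputable section

/-- infimum of `F` over the dense points inside the open ball -/
def mInf {n : ℕ} (e : ℕ → EuclideanSpace ℝ (Fin n)) (F : EuclideanSpace ℝ (Fin n) → ℝ)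
    (cc : EuclideanSpace ℝ (Fin n)) (r : ℝ) : ℝ :=
  ⨅ i : {i // e i ∈ ball cc r}, F (e i)

/-- infimum of `F` over the dense points inside the open annulus -/
def aInf {n : ℕ} (e : ℕ → EuclideanSpace ℝ (Fin n)) (F : EuclideanSpace ℝ (Fin n) → ℝ)
    (cc : EuclideanSpace ℝ (Fin n)) (r : ℝ) : ℝ :=
  ⨅ i : {i // e i ∈ ball cc r \ closedBall cc (r / 2)}, F (e i)

/-- the "good ball" event -/
def GoodB {n : ℕ} (e : ℕ → EuclideanSpace ℝ (Fin n)) (F : EuclideanSpace ℝ (Fin n) → ℝ)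
    (cc : EuclideanSpace ℝ (Fin n)) (r : ℝ) : Prop :=
  0 < r ∧ mInf e F cc r < aInf e F cc r ∧
    ∀ j : ℕ, ¬ ∀ q : ℕ, ∃ i i',
      (e i ∈ ball cc r ∧ F (e i) < mInf e F cc r + 1 / (q + 1)) ∧
      (e i' ∈ ball cc r ∧ F (e i') < mInf e F cc r + 1 / (q + 1)) ∧
      1 / ((j : ℝ) + 1) < ‖e i - e i'‖

variable {n : ℕ} {e : ℕ → EuclideanSpace ℝ (Fin n)} {F : EuclideanSpace ℝ (Fin n) → ℝ}
  {cc : EuclideanSpace ℝ (Fin n)} {r : ℝ}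

lemma aux_ann_sub (hr : 0 < r) :
    closure (ball cc r \ closedBall cc (r / 2)) ⊆ closedBall cc r := by
  refine (closure_mono diff_subset).trans ?_
  rw [closure_ball cc hr.ne']

lemma aux_ann_sub2 :
    closure (ball cc r \ closedBall cc (r / 2)) ⊆ {x | r / 2 ≤ dist x cc} := by
  apply closure_minimal
  · rintro x ⟨-, hx2⟩
    exact le_of_lt (by simpa [mem_closedBall, not_le] using hx2)
  · exact isClosed_le continuous_const (continuous_id.dist continuous_const)

lemma aux_ann_sup (hr : 0 < r) :
    closedBall cc r \ closedBall cc (r / 2) ⊆ closure (ball cc r \ closedBall cc (r / 2)) := by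
  rintro x ⟨hx1, hx2⟩
  have hxcl : x ∈ closure (ball cc r) := by rwa [closure_ball cc hr.ne']
  have hO : IsOpen (closedBall cc (r / 2))ᶜ := Metric.isClosed_closedBall.isOpen_compl
  have : x ∈ (closedBall cc (r / 2))ᶜ ∩ closure (ball cc r) := ⟨hx2, hxcl⟩
  have hsub := hO.inter_closure this
  have : (closedBall cc (r / 2))ᶜ ∩ ball cc r = ball cc r \ closedBall cc (r / 2) := by
    ext y; simp [mem_diff, and_comm]
  rwa [this] at hsub

lemma aux_ann_ne (hn : 0 < n) (hr : 0 < r) :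
    (ball cc r \ closedBall cc (r / 2)).Nonempty := by
  refine ⟨cc + (3 * r / 4) • EuclideanSpace.single (⟨0, hn⟩ : Fin n) (1 : ℝ), ?_, ?_⟩
  · rw [mem_ball, dist_eq_norm]
    simp only [add_sub_cancel_left]
    rw [norm_smul, EuclideanSpace.norm_single]
    rw [Real.norm_eq_abs, norm_one, abs_of_pos (by linarith)]
    linarith
  · rw [mem_closedBall, dist_eq_norm, not_le]
    simp only [add_sub_cancel_left]
    rw [norm_smul, EuclideanSpace.norm_single]
    rw [Real.norm_eq_abs, norm_one, abs_of_pos (by linarith)]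
    linarith

lemma aux_mInf_isLeast (he : DenseRange e) (hF : Continuous F) (hr : 0 < r) :
    IsLeast (F '' closedBall cc r) (mInf e F cc r) := by
  have := aux_isLeast e he F hF (ball cc r) isOpen_ball
    (nonempty_ball.2 hr) isBounded_ball
  rwa [closure_ball cc hr.ne'] at this

lemma aux_aInf_isLeast (hn : 0 < n) (he : DenseRange e) (hF : Continuous F) (hr : 0 < r) :
    IsLeast (F '' closure (ball cc r \ closedBall cc (r / 2))) (aInf e F cc r) :=
  aux_isLeast e he F hF _ (isOpen_ball.sdiff Metric.isClosed_closedBall)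
    (aux_ann_ne hn hr) (isBounded_ball.subset diff_subset)

end
lemma aux_sound {n : ℕ} {e : ℕ → EuclideanSpace ℝ (Fin n)} {F : EuclideanSpace ℝ (Fin n) → ℝ}
    {cc : EuclideanSpace ℝ (Fin n)} {r : ℝ} (hn : 0 < n) (he : DenseRange e)
    (hF : Continuous F) (hg : GoodB e F cc r) :
    ∃ z, z ∈ closedBall cc (r / 2) ∧ F z = mInf e F cc r ∧
      ∀ x ∈ closedBall cc r, x ≠ z → F z < F x := by
  obtain ⟨hr, hlt, hnb⟩ := hg
  have F1 := aux_mInf_isLeast (cc := cc) he hF hr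
  have F2 := aux_aInf_isLeast (cc := cc) hn he hF hr
  obtain ⟨z, hzK, hfz⟩ := F1.1
  have half : ∀ x ∈ closedBall cc r, F x = mInf e F cc r → x ∈ closedBall cc (r / 2) := by
    intro x hx hfx
    by_contra hxo
    have hxcl : x ∈ closure (ball cc r \ closedBall cc (r / 2)) := aux_ann_sup hr ⟨hx, hxo⟩
    have : aInf e F cc r ≤ F x := F2.2 ⟨x, hxcl, rfl⟩
    rw [hfx] at this
    linarith
  have uniq : ∀ x ∈ closedBall cc r, ∀ y ∈ closedBall cc r,
      F x = mInf e F cc r → F y = mInf e F cc r → x = y := by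
    intro x hx y hy hfx hfy
    by_contra hxy
    have hd : 0 < ‖x - y‖ := by
      rw [norm_pos_iff]
      exact sub_ne_zero.2 hxy
    obtain ⟨j, hj⟩ := exists_nat_one_div_lt (show (0:ℝ) < ‖x - y‖ / 2 by positivity)
    apply hnb j
    intro q
    have hqpos : (0:ℝ) < 1 / (q + 1) := by positivity
    obtain ⟨δ₁, hδ₁pos, hδ₁⟩ := Metric.continuousAt_iff.1 hF.continuousAt (1 / (q + 1)) hqpos
    obtain ⟨δ₂, hδ₂pos, hδ₂⟩ := (Metric.continuousAt_iff.1 (hF.continuousAt (x := y))) (1 / (q + 1)) hqpos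
    set δ' : ℝ := min (min δ₁ δ₂) (min (‖x - y‖ / 4) (r / 2)) with hδ'def
    have hδ' : 0 < δ' := by
      apply lt_min (lt_min hδ₁pos hδ₂pos) (lt_min (by positivity) (by linarith))
    obtain ⟨i, hi⟩ := he.exists_mem_open isOpen_ball ⟨x, mem_ball_self hδ'⟩
    obtain ⟨i', hi'⟩ := he.exists_mem_open isOpen_ball ⟨y, mem_ball_self hδ'⟩
    have hix : dist (e i) x < δ' := mem_ball.1 hi
    have hiy : dist (e i') y < δ' := mem_ball.1 hi'
    have hδ'a : δ' ≤ δ₁ := (min_le_left _ _).trans (min_le_left _ _)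
    have hδ'b : δ' ≤ δ₂ := (min_le_left _ _).trans (min_le_right _ _)
    have hδ'c : δ' ≤ ‖x - y‖ / 4 := (min_le_right _ _).trans (min_le_left _ _)
    have hδ'd : δ' ≤ r / 2 := (min_le_right _ _).trans (min_le_right _ _)
    have hxhalf : dist x cc ≤ r / 2 := mem_closedBall.1 (half x hx hfx)
    have hyhalf : dist y cc ≤ r / 2 := mem_closedBall.1 (half y hy hfy)
    refine ⟨i, i', ⟨?_, ?_⟩, ⟨?_, ?_⟩, ?_⟩
    · rw [mem_ball]
      calc dist (e i) cc ≤ dist (e i) x + dist x cc := dist_triangle _ _ _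
        _ < δ' + r / 2 := by linarith
        _ ≤ r := by linarith
    · have := hδ₁ (lt_of_lt_of_le hix hδ'a)
      rw [Real.dist_eq] at this
      have h2 : F (e i) - F x < 1 / (q + 1) := lt_of_le_of_lt (le_abs_self _) this
      rw [hfx] at h2
      linarith
    · rw [mem_ball]
      calc dist (e i') cc ≤ dist (e i') y + dist y cc := dist_triangle _ _ _
        _ < δ' + r / 2 := by linarith
        _ ≤ r := by linarith
    · have := hδ₂ (lt_of_lt_of_le hiy hδ'b)
      rw [Real.dist_eq] at this
      have h2 : F (e i') - F y < 1 / (q + 1) := lt_of_le_of_lt (le_abs_self _) this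
      rw [hfy] at h2
      linarith
    · have ht : x - y = (x - e i) + (e i - e i') + (e i' - y) := by abel
      have h3 : ‖x - y‖ ≤ ‖x - e i‖ + ‖e i - e i'‖ + ‖e i' - y‖ := by
        rw [ht]; exact norm_add₃_le
      have h4 : ‖x - e i‖ < δ' := by rwa [← dist_eq_norm, dist_comm]
      have h5 : ‖e i' - y‖ < δ' := by rwa [← dist_eq_norm]
      linarith
  refine ⟨z, half z hzK hfz, hfz, ?_⟩
  intro x hx hxz
  have hle : mInf e F cc r ≤ F x := F1.2 ⟨x, hx, rfl⟩
  rcases eq_or_lt_of_le hle with heq | hltx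
  · exact absurd (uniq x hx z hzK heq.symm hfz) hxz
  · rw [hfz]; exact hltx
lemma aux_complete {n : ℕ} {e : ℕ → EuclideanSpace ℝ (Fin n)} {F : EuclideanSpace ℝ (Fin n) → ℝ}
    (hn : 0 < n) (he : DenseRange e) (hF : Continuous F)
    (x₀ : EuclideanSpace ℝ (Fin n)) (ρ : ℝ) (hρ : 0 < ρ)
    (hstrict : ∀ x, x ≠ x₀ → ‖x - x₀‖ ≤ ρ → F x₀ < F x) :
    ∃ (i₀ : ℕ) (s : ℚ), GoodB e F (e i₀) (s : ℝ) := by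
  obtain ⟨s, hs1, hs2⟩ := exists_rat_btwn (show (ρ/4:ℝ) < ρ/2 by linarith)
  obtain ⟨i₀, hi₀⟩ := he.exists_mem_open isOpen_ball
    ⟨x₀, mem_ball_self (show (0:ℝ) < ρ/8 by linarith)⟩
  refine ⟨i₀, s, ?_⟩
  set cc : EuclideanSpace ℝ (Fin n) := e i₀ with hccdef
  set r : ℝ := (s : ℝ) with hrdef
  have hr : 0 < r := lt_trans (by linarith) hs1
  have hcx : dist x₀ cc < ρ/8 := by rw [dist_comm]; exact mem_ball.1 hi₀
  have hsub : ∀ x ∈ closedBall cc r, ‖x - x₀‖ ≤ ρ := by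
    intro x hx
    rw [← dist_eq_norm]
    calc dist x x₀ ≤ dist x cc + dist cc x₀ := dist_triangle _ _ _
      _ ≤ r + ρ/8 := add_le_add (mem_closedBall.1 hx) (le_of_lt (by rwa [dist_comm]))
      _ ≤ ρ := by linarith
  have hx₀mem : x₀ ∈ closedBall cc r := by
    rw [mem_closedBall]
    linarith
  have hx₀half : dist x₀ cc < r / 2 := by linarith
  have hFleast : IsLeast (F '' closedBall cc r) (F x₀) := by
    constructor
    · exact ⟨x₀, hx₀mem, rfl⟩
    · rintro _ ⟨x, hx, rfl⟩
      by_cases hxx : x = x₀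
      · rw [hxx]
      · exact le_of_lt (hstrict x hxx (hsub x hx))
  have hm : mInf e F cc r = F x₀ := (aux_mInf_isLeast he hF hr).unique hFleast
  refine ⟨hr, ?_, ?_⟩
  · -- mInf < aInf
    have F2 := aux_aInf_isLeast (cc := cc) hn he hF hr
    obtain ⟨y, hycl, hfy⟩ := F2.1
    have hy1 : y ∈ closedBall cc r := aux_ann_sub hr hycl
    have hy2 : r/2 ≤ dist y cc := aux_ann_sub2 hycl
    have hyne : y ≠ x₀ := by
      intro h
      rw [h] at hy2
      linarith
    have := hstrict y hyne (hsub y hy1)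
    rw [hm, ← hfy]
    exact this
  · -- no two far-apart near-minimizers
    intro j hbad
    choose xi xi' h1 h2 h3 using hbad
    have hXmem : ∀ q, e (xi q) ∈ closedBall cc r := fun q => ball_subset_closedBall (h1 q).1
    have hYmem : ∀ q, e (xi' q) ∈ closedBall cc r := fun q => ball_subset_closedBall (h2 q).1
    obtain ⟨x₁, hx₁K, φ₁, hφ₁m, hφ₁t⟩ :=
      (isCompact_closedBall cc r).tendsto_subseq hXmem
    obtain ⟨y₁, hy₁K, φ₂, hφ₂m, hφ₂t⟩ :=
      (isCompact_closedBall cc r).tendsto_subseq (fun q => hYmem (φ₁ q))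
    set σ : ℕ → ℕ := fun t => φ₁ (φ₂ t) with hσdef
    have hσm : StrictMono σ := hφ₁m.comp hφ₂m
    have hXt : Tendsto (fun t => e (xi (σ t))) atTop (𝓝 x₁) := hφ₁t.comp hφ₂m.tendsto_atTop
    have hYt : Tendsto (fun t => e (xi' (σ t))) atTop (𝓝 y₁) := hφ₂t
    have hrhs : Tendsto (fun t : ℕ => F x₀ + 1/((t:ℝ)+1)) atTop (𝓝 (F x₀)) := by
      have := tendsto_const_nhds (x := F x₀) (f := atTop (α := ℕ)) |>.add
        tendsto_one_div_add_atTop_nhds_zero_nat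
      simpa using this
    have key : ∀ (w : EuclideanSpace ℝ (Fin n)) (W : ℕ → ℕ),
        (∀ q, e (W q) ∈ closedBall cc r) →
        (∀ q, F (e (W q)) < mInf e F cc r + 1/((q:ℝ)+1)) →
        Tendsto (fun t => e (W (σ t))) atTop (𝓝 w) → w = x₀ := by
      intro w W hWmem hWval hWt
      have hlim : Tendsto (fun t => F (e (W (σ t)))) atTop (𝓝 (F w)) :=
        (hF.continuousAt.tendsto).comp hWt
      have hub : ∀ t : ℕ, F (e (W (σ t))) ≤ F x₀ + 1/((t:ℝ)+1) := by
        intro t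
        have hv := hWval (σ t)
        rw [hm] at hv
        have hmono : (1:ℝ)/((σ t : ℝ)+1) ≤ 1/((t:ℝ)+1) := by
          apply one_div_le_one_div_of_le (by positivity)
          have h0 : t ≤ σ t := hσm.le_apply
          have h1 : (t:ℝ) ≤ (σ t : ℝ) := Nat.cast_le.2 h0
          linarith
        linarith
      have hFw : F w ≤ F x₀ := le_of_tendsto_of_tendsto' hlim hrhs hub
      by_contra hne
      have hwK : w ∈ closedBall cc r :=
        Metric.isClosed_closedBall.mem_of_tendsto hWt (Eventually.of_forall fun t => hWmem (σ t))
      exact absurd hFw (not_le.2 (hstrict w hne (hsub w hwK)))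
    have hx₁ : x₁ = x₀ := key x₁ xi hXmem (fun q => (h1 q).2) hXt
    have hy₁ : y₁ = x₀ := key y₁ xi' hYmem (fun q => (h2 q).2) hYt
    have hnt : Tendsto (fun t => ‖e (xi (σ t)) - e (xi' (σ t))‖) atTop (𝓝 ‖x₁ - y₁‖) :=
      (hXt.sub hYt).norm
    have hge : 1/((j:ℝ)+1) ≤ ‖x₁ - y₁‖ :=
      le_of_tendsto_of_tendsto' tendsto_const_nhds hnt (fun t => le_of_lt (h3 (σ t)))
    rw [hx₁, hy₁, sub_self, norm_zero] at hge
    have : (0:ℝ) < 1/((j:ℝ)+1) := by positivity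
    linarith
lemma aux_Pex {n : ℕ} {e : ℕ → EuclideanSpace ℝ (Fin n)} {F : EuclideanSpace ℝ (Fin n) → ℝ}
    {cc : EuclideanSpace ℝ (Fin n)} {r : ℝ} (he : DenseRange e) (hr : 0 < r) (q : ℕ) :
    ∃ i, e i ∈ ball cc r ∧ F (e i) < mInf e F cc r + 1/((q:ℝ)+1) := by
  haveI hNe : Nonempty {i // e i ∈ ball cc r} := by
    obtain ⟨i, hi⟩ := he.exists_mem_open isOpen_ball (nonempty_ball.2 hr)
    exact ⟨⟨i, hi⟩⟩
  have hlt : (⨅ i : {i // e i ∈ ball cc r}, F (e i)) < mInf e F cc r + 1/((q:ℝ)+1) := by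
    have h0 : (0:ℝ) < 1/((q:ℝ)+1) := by positivity
    have : (⨅ i : {i // e i ∈ ball cc r}, F (e i)) = mInf e F cc r := rfl
    linarith
  obtain ⟨⟨i, hi⟩, hlt'⟩ := exists_lt_of_ciInf_lt hlt
  exact ⟨i, hi, hlt'⟩

lemma aux_tendsto {n : ℕ} {e : ℕ → EuclideanSpace ℝ (Fin n)} {F : EuclideanSpace ℝ (Fin n) → ℝ}
    {cc : EuclideanSpace ℝ (Fin n)} {r : ℝ} (he : DenseRange e) (hF : Continuous F)
    (hg : GoodB e F cc r) (z : EuclideanSpace ℝ (Fin n))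
    (hz1 : z ∈ closedBall cc (r / 2)) (hz2 : F z = mInf e F cc r)
    (hz3 : ∀ x ∈ closedBall cc r, x ≠ z → F z < F x)
    (w : ℕ → EuclideanSpace ℝ (Fin n))
    (hw : ∀ q, w q ∈ ball cc r ∧ F (w q) < mInf e F cc r + 1/((q:ℝ)+1)) :
    Tendsto w atTop (𝓝 z) := by
  obtain ⟨hr, -, -⟩ := hg
  have F1 := aux_mInf_isLeast (cc := cc) he hF hr
  apply tendsto_of_subseq_tendsto
  intro ns hns
  obtain ⟨x₁, hx₁K, φ, hφm, hφt⟩ := (isCompact_closedBall cc r).tendsto_subseq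
    (fun q => ball_subset_closedBall (hw (ns q)).1)
  refine ⟨φ, ?_⟩
  have hlim : Tendsto (fun t => F (w (ns (φ t)))) atTop (𝓝 (F x₁)) :=
    hF.continuousAt.tendsto.comp hφt
  have hnsφ : Tendsto (fun t => ns (φ t)) atTop atTop := hns.comp hφm.tendsto_atTop
  have hub : Tendsto (fun t => mInf e F cc r + 1/(((ns (φ t)):ℝ)+1)) atTop
      (𝓝 (mInf e F cc r)) := by
    have h0 : Tendsto (fun t => 1/(((ns (φ t)):ℝ)+1)) atTop (𝓝 0) :=
      tendsto_one_div_add_atTop_nhds_zero_nat.comp hnsφ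
    simpa using tendsto_const_nhds.add h0
  have h1 : F x₁ ≤ mInf e F cc r :=
    le_of_tendsto_of_tendsto' hlim hub (fun t => le_of_lt (hw (ns (φ t))).2)
  have h2 : mInf e F cc r ≤ F x₁ := F1.2 ⟨x₁, hx₁K, rfl⟩
  have hx₁z : x₁ = z := by
    by_contra hne
    have := hz3 x₁ hx₁K hne
    rw [hz2] at this
    linarith
  rwa [hx₁z] at hφt
lemma aux_main {Ω : Type*} {n : ℕ} [MeasurableSpace Ω] (hn : 0 < n)
    (f : Ω → EuclideanSpace ℝ (Fin n) → ℝ)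
    (hfm : ∀ x, Measurable fun ω => f ω x)
    (hfc : ∀ ω, Continuous (f ω))
    (hmin : ∀ ω, ∃ x₀, ∃ ρ > 0, ∀ x, x ≠ x₀ → ‖x - x₀‖ ≤ ρ → f ω x₀ < f ω x) :
    ∃ ψ : Ω → EuclideanSpace ℝ (Fin n), Measurable ψ ∧
      ∀ ω, ∃ δ > 0, ∀ x, x ≠ ψ ω → ‖x - ψ ω‖ < δ → f ω (ψ ω) < f ω x := by
  classical
  haveI : Nonempty (EuclideanSpace ℝ (Fin n)) := ⟨0⟩
  set e : ℕ → EuclideanSpace ℝ (Fin n) := TopologicalSpace.denseSeq _ with hedef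
  have he : DenseRange e := TopologicalSpace.denseRange_denseSeq _
  set g : ℕ ≃ ℚ := (Denumerable.eqv ℚ).symm with hgdef
  set c : ℕ → EuclideanSpace ℝ (Fin n) := fun k => e (Nat.unpair k).1 with hcdef
  set r : ℕ → ℝ := fun k => ((g (Nat.unpair k).2 : ℚ) : ℝ) with hrdef
  -- measurability of infima
  have MInfGen : ∀ (U : Set (EuclideanSpace ℝ (Fin n))), Bornology.IsBounded U →
      Measurable fun ω => ⨅ i : {i // e i ∈ U}, f ω (e i) := by
    intro U hb
    rcases isEmpty_or_nonempty {i // e i ∈ U} with hemp | hne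
    · simp only [Real.iInf_of_isEmpty]
      exact measurable_const
    · apply aux_measurable_ciInf
      · exact fun i => hfm (e i)
      · intro ω
        have hK : IsCompact (closure U) := hb.isCompact_closure
        have hbb : BddBelow (f ω '' closure U) :=
          (hK.image_of_continuousOn (hfc ω).continuousOn).bddBelow
        apply BddBelow.mono ?_ hbb
        rintro _ ⟨i, rfl⟩
        exact ⟨e i, subset_closure i.2, rfl⟩
  have Mm : ∀ k, Measurable (fun ω => mInf e (f ω) (c k) (r k)) :=
    fun k => MInfGen _ isBounded_ball
  have Ma : ∀ k, Measurable (fun ω => aInf e (f ω) (c k) (r k)) :=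
    fun k => MInfGen _ (isBounded_ball.subset diff_subset)
  -- measurability of elementary events
  have MP : ∀ (k q i : ℕ), MeasurableSet {ω | e i ∈ ball (c k) (r k) ∧
      f ω (e i) < mInf e (f ω) (c k) (r k) + 1/((q:ℝ)+1)} := by
    intro k q i
    by_cases hb : e i ∈ ball (c k) (r k)
    · have hset : {ω | e i ∈ ball (c k) (r k) ∧
          f ω (e i) < mInf e (f ω) (c k) (r k) + 1/((q:ℝ)+1)} =
          {ω | f ω (e i) < mInf e (f ω) (c k) (r k) + 1/((q:ℝ)+1)} := by
        ext ω; simp [hb]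
      rw [hset]
      exact measurableSet_lt (hfm (e i)) ((Mm k).add_const _)
    · have hset : {ω | e i ∈ ball (c k) (r k) ∧
          f ω (e i) < mInf e (f ω) (c k) (r k) + 1/((q:ℝ)+1)} = ∅ := by
        ext ω; simp [hb]
      rw [hset]
      exact MeasurableSet.empty
  have MGood : ∀ k, MeasurableSet {ω | GoodB e (f ω) (c k) (r k)} := by
    intro k
    by_cases hr0 : 0 < r k
    · have hset : {ω | GoodB e (f ω) (c k) (r k)} =
          {ω | mInf e (f ω) (c k) (r k) < aInf e (f ω) (c k) (r k)} ∩
          ⋂ j : ℕ, (⋂ q : ℕ, ⋃ i : ℕ, ⋃ i' : ℕ,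
            ({ω | e i ∈ ball (c k) (r k) ∧
                f ω (e i) < mInf e (f ω) (c k) (r k) + 1/((q:ℝ)+1)} ∩
             ({ω | e i' ∈ ball (c k) (r k) ∧
                f ω (e i') < mInf e (f ω) (c k) (r k) + 1/((q:ℝ)+1)} ∩
             {ω | 1/((j:ℝ)+1) < ‖e i - e i'‖})))ᶜ := by
        ext ω
        simp only [GoodB, Set.mem_setOf_eq, Set.mem_inter_iff, Set.mem_iInter,
          Set.mem_compl_iff, Set.mem_iUnion, Set.mem_inter_iff]
        constructor
        · rintro ⟨-, h2, h3⟩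
          exact ⟨h2, h3⟩
        · rintro ⟨h2, h3⟩
          exact ⟨hr0, h2, h3⟩
      rw [hset]
      exact (measurableSet_lt (Mm k) (Ma k)).inter
        (MeasurableSet.iInter fun j =>
          (MeasurableSet.iInter fun q =>
            MeasurableSet.iUnion fun i => MeasurableSet.iUnion fun i' =>
              (MP k q i).inter ((MP k q i').inter (MeasurableSet.const _))).compl)
    · have hset : {ω | GoodB e (f ω) (c k) (r k)} = ∅ := by
        ext ω
        simp only [GoodB, Set.mem_setOf_eq, Set.mem_empty_iff_false, iff_false]
        rintro ⟨h, -⟩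
        exact hr0 h
      rw [hset]
      exact MeasurableSet.empty
  -- every ω has a good ball
  have C2 : ∀ ω, ∃ k, GoodB e (f ω) (c k) (r k) := by
    intro ω
    obtain ⟨x₀, ρ, hρ, hstrict⟩ := hmin ω
    obtain ⟨i₀, s, hGood⟩ := aux_complete hn he (hfc ω) x₀ ρ hρ hstrict
    refine ⟨Nat.pair i₀ (g.symm s), ?_⟩
    have h1 : c (Nat.pair i₀ (g.symm s)) = e i₀ := by
      simp only [hcdef, Nat.unpair_pair]
    have h2 : r (Nat.pair i₀ (g.symm s)) = (s : ℝ) := by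
      simp only [hrdef, Nat.unpair_pair, Equiv.apply_symm_apply]
    rw [h1, h2]
    exact hGood
  set K : Ω → ℕ := fun ω => Nat.find (C2 ω) with hKdef
  have hKgood : ∀ ω, GoodB e (f ω) (c (K ω)) (r (K ω)) := fun ω => Nat.find_spec (C2 ω)
  have MKset : ∀ k, MeasurableSet {ω | K ω = k} := by
    intro k
    have hset : {ω | K ω = k} = {ω | GoodB e (f ω) (c k) (r k)} ∩
        ⋂ (k' : ℕ) (_ : k' < k), {ω | GoodB e (f ω) (c k') (r k')}ᶜ := by
      ext ω
      simp only [hKdef, Set.mem_setOf_eq, Set.mem_inter_iff, Set.mem_iInter,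
        Set.mem_compl_iff, Nat.find_eq_iff (C2 ω)]
    rw [hset]
    exact (MGood k).inter
      (MeasurableSet.iInter fun k' => MeasurableSet.iInter fun _ => (MGood k').compl)
  have MK : Measurable K := measurable_to_countable' MKset
  -- the selection
  have hzfun : ∀ ω, ∃ z, z ∈ closedBall (c (K ω)) (r (K ω) / 2) ∧
      f ω z = mInf e (f ω) (c (K ω)) (r (K ω)) ∧
      ∀ x ∈ closedBall (c (K ω)) (r (K ω)), x ≠ z → f ω z < f ω x :=
    fun ω => aux_sound hn he (hfc ω) (hKgood ω)
  set ψ : Ω → EuclideanSpace ℝ (Fin n) := fun ω => (hzfun ω).choose with hψdef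
  have hψ : ∀ ω, ψ ω ∈ closedBall (c (K ω)) (r (K ω) / 2) ∧
      f ω (ψ ω) = mInf e (f ω) (c (K ω)) (r (K ω)) ∧
      ∀ x ∈ closedBall (c (K ω)) (r (K ω)), x ≠ ψ ω → f ω (ψ ω) < f ω x :=
    fun ω => (hzfun ω).choose_spec
  -- approximating sequence
  have Pex : ∀ ω (q : ℕ), ∃ i, e i ∈ ball (c (K ω)) (r (K ω)) ∧
      f ω (e i) < mInf e (f ω) (c (K ω)) (r (K ω)) + 1/((q:ℝ)+1) :=
    fun ω q => aux_Pex he (hKgood ω).1 q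
  set ι : ℕ → Ω → ℕ := fun q ω => Nat.find (Pex ω q) with hιdef
  have Mι : ∀ q, Measurable (ι q) := by
    intro q
    apply measurable_to_countable'
    intro i
    show MeasurableSet {ω | ι q ω = i}
    have hset : {ω | ι q ω = i} = ⋃ k : ℕ, ({ω | K ω = k} ∩
        ({ω | e i ∈ ball (c k) (r k) ∧
            f ω (e i) < mInf e (f ω) (c k) (r k) + 1/((q:ℝ)+1)} ∩
         ⋂ (i' : ℕ) (_ : i' < i), {ω | e i' ∈ ball (c k) (r k) ∧
            f ω (e i') < mInf e (f ω) (c k) (r k) + 1/((q:ℝ)+1)}ᶜ)) := by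
      ext ω
      simp only [hιdef, Set.mem_setOf_eq, Set.mem_iUnion, Set.mem_inter_iff,
        Set.mem_iInter, Set.mem_compl_iff]
      constructor
      · intro h
        rw [Nat.find_eq_iff (Pex ω q)] at h
        exact ⟨K ω, rfl, h.1, fun i' hi' => h.2 i' hi'⟩
      · rintro ⟨k, hk, h1, h2⟩
        subst hk
        rw [Nat.find_eq_iff (Pex ω q)]
        exact ⟨h1, h2⟩
    rw [hset]
    refine MeasurableSet.iUnion fun k => (MKset k).inter
      ((MP k q i).inter
        (MeasurableSet.iInter fun i' => MeasurableSet.iInter fun _ => (MP k q i').compl))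
  have Mψa : ∀ q, Measurable (fun ω => e (ι q ω)) :=
    fun q => measurable_from_top.comp (Mι q)
  have conv : ∀ ω, Tendsto (fun q => e (ι q ω)) atTop (𝓝 (ψ ω)) := by
    intro ω
    exact aux_tendsto he (hfc ω) (hKgood ω) (ψ ω) (hψ ω).1 (hψ ω).2.1 (hψ ω).2.2
      (fun q => e (ι q ω)) (fun q => Nat.find_spec (Pex ω q))
  have Mψ : Measurable ψ :=
    measurable_of_tendsto_metrizable Mψa (tendsto_pi_nhds.2 conv)
  refine ⟨ψ, Mψ, ?_⟩
  intro ω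
  refine ⟨r (K ω) / 2, by linarith [(hKgood ω).1], ?_⟩
  intro x hne hxd
  have hmem : x ∈ closedBall (c (K ω)) (r (K ω)) := by
    rw [mem_closedBall]
    have h1 : dist x (ψ ω) < r (K ω) / 2 := by rwa [dist_eq_norm]
    have h2 : dist (ψ ω) (c (K ω)) ≤ r (K ω) / 2 := mem_closedBall.1 (hψ ω).1
    calc dist x (c (K ω)) ≤ dist x (ψ ω) + dist (ψ ω) (c (K ω)) := dist_triangle _ _ _
      _ ≤ r (K ω) := by linarith
  exact (hψ ω).2.2 x hmem hne
theorem stmt_11 {Ω : Type*} {n : ℕ} [MeasurableSpace Ω] (μ : Measure Ω)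
    [IsProbabilityMeasure μ] [μ.IsComplete]
    (f : Ω → EuclideanSpace ℝ (Fin n) → ℝ)
    (hfm : ∀ x, Measurable fun ω => f ω x)
    (hfc : ∀ ω, ContDiff ℝ 2 (f ω))
    (ξ : Ω → EuclideanSpace ℝ (Fin n))
    (hξ : ∀ ω, gradient (f ω) (ξ ω) = 0 ∧
      ∀ v : EuclideanSpace ℝ (Fin n), v ≠ 0 → 0 < iteratedFDeriv ℝ 2 (f ω) (ξ ω) ![v, v]) :
    ∃ ψ : Ω → EuclideanSpace ℝ (Fin n), Measurable ψ ∧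
      ∀ ω, ∃ δ > 0, ∀ x, x ≠ ψ ω → ‖x - ψ ω‖ < δ → f ω (ψ ω) < f ω x := by
  rcases Nat.eq_zero_or_pos n with hn | hn
  · subst hn
    refine ⟨fun _ => 0, measurable_const, fun ω => ⟨1, one_pos, fun x hx _ => ?_⟩⟩
    exact absurd (by ext i; exact Fin.elim0 i : x = 0) hx
  · apply aux_main hn f hfm (fun ω => (hfc ω).continuous)
    intro ω
    obtain ⟨hg, hH⟩ := hξ ω
    have hfd : fderiv ℝ (f ω) (ξ ω) = 0 := by
      have h0 : (InnerProductSpace.toDual ℝ (EuclideanSpace ℝ (Fin n))).symm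
          (fderiv ℝ (f ω) (ξ ω)) = 0 := hg
      have h1 := congrArg (InnerProductSpace.toDual ℝ (EuclideanSpace ℝ (Fin n))) h0
      rwa [LinearIsometryEquiv.apply_symm_apply, map_zero] at h1
    obtain ⟨ρ, hρ, h⟩ := aux_strict_local_min (f ω) (hfc ω) (ξ ω) hfd hH
    exact ⟨ξ ω, ρ, hρ, h⟩
end

section
/- Let (Ω, F, P) be a complete probability space and f: Ω × ℝⁿ → ℝ a random function, twice continuously differentiable in x for each ω, such that the Hessian H(ω, x) is positive semi-definite for all (ω, x). If there exists a map ξ: Ω → ℝⁿ with g(ω, ξ(ω)) = 0 and H(ω, ξ(ω)) positive definite for all ω, then there exists a measurable ψ: Ω → ℝⁿ with f(ω, ψ(ω)) = inf_{x ∈ ℝⁿ} f(ω, x) for every ω ∈ Ω. -/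
open MeasureTheory
open scoped Topology

section Aux

variable {n : ℕ}

lemma phi_hasDerivAt {F : EuclideanSpace ℝ (Fin n) → ℝ} (hF : ContDiff ℝ 2 F)
    (a v : EuclideanSpace ℝ (Fin n)) (t : ℝ) :
    HasDerivAt (fun s : ℝ => F (a + s • v)) (fderiv ℝ F (a + t • v) v) t := by
  have hc : HasDerivAt (fun s : ℝ => a + s • v) v t := by
    simpa using ((hasDerivAt_id t).smul_const v).const_add a
  exact (hF.differentiable (by norm_num) (a + t • v)).hasFDerivAt.comp_hasDerivAt t hc

lemma phi_deriv_hasDerivAt {F : EuclideanSpace ℝ (Fin n) → ℝ} (hF : ContDiff ℝ 2 F)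
    (a v : EuclideanSpace ℝ (Fin n)) (t : ℝ) :
    HasDerivAt (fun s : ℝ => fderiv ℝ F (a + s • v) v)
      (iteratedFDeriv ℝ 2 F (a + t • v) ![v, v]) t := by
  have hc : HasDerivAt (fun s : ℝ => a + s • v) v t := by
    simpa using ((hasDerivAt_id t).smul_const v).const_add a
  have hG : ContDiff ℝ 1 (fderiv ℝ F) := (hF.fderiv_right (by norm_num))
  have h1 : HasFDerivAt (fderiv ℝ F) (fderiv ℝ (fderiv ℝ F) (a + t • v)) (a + t • v) :=
    (hG.differentiable (by norm_num) (a + t • v)).hasFDerivAt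
  have h2 : HasDerivAt (fun s : ℝ => fderiv ℝ F (a + s • v))
      (fderiv ℝ (fderiv ℝ F) (a + t • v) v) t := h1.comp_hasDerivAt t hc
  have h3 := h2.clm_apply (hasDerivAt_const t v)
  simpa [iteratedFDeriv_two_apply] using h3

variable {F : EuclideanSpace ℝ (Fin n) → ℝ} (hF : ContDiff ℝ 2 F)
  {a : EuclideanSpace ℝ (Fin n)} (ha : fderiv ℝ F a = 0)
  (hpsd : ∀ x v : EuclideanSpace ℝ (Fin n), 0 ≤ iteratedFDeriv ℝ 2 F x ![v, v])

include hF hpsd in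
lemma D1_mono (v : EuclideanSpace ℝ (Fin n)) :
    Monotone (fun t : ℝ => fderiv ℝ F (a + t • v) v) := by
  apply monotone_of_deriv_nonneg
  · exact fun t => (phi_deriv_hasDerivAt hF a v t).differentiableAt
  · intro t
    rw [(phi_deriv_hasDerivAt hF a v t).deriv]
    exact hpsd _ _

include hF ha hpsd in
lemma D1_nonneg (v : EuclideanSpace ℝ (Fin n)) {t : ℝ} (ht : 0 ≤ t) :
    0 ≤ fderiv ℝ F (a + t • v) v := by
  have := D1_mono hF hpsd (a := a) v ht
  simpa [ha] using this

include hF ha hpsd in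
lemma phi_monoOn (v : EuclideanSpace ℝ (Fin n)) :
    MonotoneOn (fun t : ℝ => F (a + t • v)) (Set.Ici 0) := by
  apply monotoneOn_of_deriv_nonneg (convex_Ici 0)
  · exact (hF.continuous.comp (by continuity)).continuousOn
  · intro t ht
    exact (phi_hasDerivAt hF a v t).differentiableAt.differentiableWithinAt
  · intro t ht
    rw [(phi_hasDerivAt hF a v t).deriv]
    exact D1_nonneg hF ha hpsd v (le_of_lt (by simpa using ht))

include hF ha hpsd in
lemma F_min (x : EuclideanSpace ℝ (Fin n)) : F a ≤ F x := by
  have := phi_monoOn hF ha hpsd (x - a) (Set.self_mem_Ici (a := (0:ℝ)))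
    (by norm_num : (1:ℝ) ∈ Set.Ici (0:ℝ)) zero_le_one
  simpa using this

include hF ha hpsd in
lemma F_strict (hpd : ∀ v : EuclideanSpace ℝ (Fin n), v ≠ 0 → 0 < iteratedFDeriv ℝ 2 F a ![v, v])
    {x : EuclideanSpace ℝ (Fin n)} (hx : x ≠ a) : F a < F x := by
  set v := x - a with hv
  have hv0 : v ≠ 0 := sub_ne_zero.mpr hx
  set D1 : ℝ → ℝ := fun t => fderiv ℝ F (a + t • v) v with hD1
  have hD10 : D1 0 = 0 := by simp [hD1, ha]
  have hc : 0 < iteratedFDeriv ℝ 2 F (a + (0:ℝ) • v) ![v, v] := by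
    simpa using hpd v hv0
  have hslope := hasDerivAt_iff_tendsto_slope.mp (phi_deriv_hasDerivAt hF a v 0)
  have hev : ∀ᶠ t in 𝓝[>] (0:ℝ), 0 < slope D1 0 t := by
    have h1 : ∀ᶠ t in 𝓝[≠] (0:ℝ), 0 < slope D1 0 t := hslope (lt_mem_nhds hc)
    exact h1.filter_mono (nhdsWithin_mono 0 (fun t ht => ne_of_gt ht))
  obtain ⟨t0, ht0pos, ht0⟩ :=
    (hev.and (Ioo_mem_nhdsGT_of_mem (by norm_num : (0:ℝ) ∈ Set.Ico 0 1))).exists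
  obtain ⟨ht0s, ht0lt⟩ := ht0
  have ht0' : 0 < t0 := ht0s
  have hD1t0 : 0 < D1 t0 := by
    have : slope D1 0 t0 = D1 t0 / t0 := by simp [slope, hD10, div_eq_inv_mul]
    rw [this] at ht0pos
    have := mul_pos ht0pos ht0'
    rwa [div_mul_cancel₀ _ (ne_of_gt ht0')] at this
  have hsm : StrictMonoOn (fun t : ℝ => F (a + t • v)) (Set.Icc t0 1) := by
    apply strictMonoOn_of_deriv_pos (convex_Icc t0 1)
    · exact (hF.continuous.comp (by continuity)).continuousOn
    · intro t ht
      rw [interior_Icc] at ht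
      rw [(phi_hasDerivAt hF a v t).deriv]
      exact lt_of_lt_of_le hD1t0 (D1_mono hF hpsd (a := a) v (le_of_lt ht.1))
  have h1 : F (a + t0 • v) < F (a + (1:ℝ) • v) :=
    hsm (Set.left_mem_Icc.mpr (le_of_lt ht0lt)) (Set.right_mem_Icc.mpr (le_of_lt ht0lt)) ht0lt
  have h0 : F (a + (0:ℝ) • v) ≤ F (a + t0 • v) :=
    phi_monoOn hF ha hpsd v (Set.self_mem_Ici) (Set.mem_Ici.mpr (le_of_lt ht0')) (le_of_lt ht0')
  have := lt_of_le_of_lt h0 h1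
  simpa [hv] using this

include hF ha hpsd in
lemma F_coercive (hpd : ∀ v : EuclideanSpace ℝ (Fin n), v ≠ 0 → 0 < iteratedFDeriv ℝ 2 F a ![v, v])
    {ε : ℝ} (hε : 0 < ε) :
    ∃ η > 0, ∀ x, F x < F a + η → dist x a < ε := by
  have key : ∀ x : EuclideanSpace ℝ (Fin n), ε ≤ dist x a →
      ∃ p ∈ Metric.sphere a ε, F p ≤ F x := by
    intro x hx
    have hd : 0 < dist x a := lt_of_lt_of_le hε hx
    set s : ℝ := ε / dist x a with hs
    have hs0 : 0 < s := div_pos hε hd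
    have hs1 : s ≤ 1 := (div_le_one hd).mpr hx
    refine ⟨a + s • (x - a), ?_, ?_⟩
    · simp only [Metric.mem_sphere]
      rw [dist_eq_norm, add_sub_cancel_left, norm_smul, Real.norm_eq_abs,
        abs_of_pos hs0, hs, ← dist_eq_norm]
      field_simp
    · have := phi_monoOn hF ha hpsd (x - a) (Set.mem_Ici.mpr (le_of_lt hs0))
        (Set.mem_Ici.mpr (le_trans (le_of_lt hs0) hs1)) hs1
      simpa using this
  by_cases hne : (Metric.sphere a ε).Nonempty
  · obtain ⟨p0, hp0, hmin⟩ := (isCompact_sphere a ε).exists_isMinOn hne hF.continuous.continuousOn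
    have hp0a : p0 ≠ a := by
      intro h
      rw [h] at hp0
      simp [Metric.mem_sphere] at hp0
      exact absurd hp0.symm (ne_of_gt hε)
    refine ⟨F p0 - F a, sub_pos.mpr (F_strict hF ha hpsd hpd hp0a), fun x hx => ?_⟩
    by_contra h
    push_neg at h
    obtain ⟨p, hp, hpx⟩ := key x h
    have : F p0 ≤ F p := hmin hp
    linarith
  · refine ⟨1, one_pos, fun x hx => ?_⟩
    by_contra h
    push_neg at h
    obtain ⟨p, hp, -⟩ := key x h
    exact hne ⟨p, hp⟩

end Aux

theorem stmt_13 {Ω : Type*} {n : ℕ} [MeasurableSpace Ω] (μ : Measure Ω)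
    [IsProbabilityMeasure μ] [μ.IsComplete]
    (f : Ω → EuclideanSpace ℝ (Fin n) → ℝ)
    (hfm : ∀ x, Measurable fun ω => f ω x)
    (hfc : ∀ ω, ContDiff ℝ 2 (f ω))
    (hpsd : ∀ ω, ∀ x v : EuclideanSpace ℝ (Fin n), 0 ≤ iteratedFDeriv ℝ 2 (f ω) x ![v, v])
    (ξ : Ω → EuclideanSpace ℝ (Fin n))
    (hξ : ∀ ω, gradient (f ω) (ξ ω) = 0 ∧
      ∀ v : EuclideanSpace ℝ (Fin n), v ≠ 0 → 0 < iteratedFDeriv ℝ 2 (f ω) (ξ ω) ![v, v]) :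
    ∃ ψ : Ω → EuclideanSpace ℝ (Fin n), Measurable ψ ∧
      ∀ ω, f ω (ψ ω) = ⨅ x : EuclideanSpace ℝ (Fin n), f ω x := by
  classical
  -- gradient zero gives fderiv zero
  have ha : ∀ ω, fderiv ℝ (f ω) (ξ ω) = 0 := by
    intro ω
    have h := (hξ ω).1
    rw [gradient] at h
    exact ((InnerProductSpace.toDual ℝ (EuclideanSpace ℝ (Fin n))).symm.map_eq_zero_iff).mp h
  -- ξ ω is a global minimizer
  have hmin : ∀ ω x, f ω (ξ ω) ≤ f ω x := fun ω x =>
    F_min (hfc ω) (ha ω) (hpsd ω) x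
  have hbdd : ∀ ω, BddBelow (Set.range (f ω)) := fun ω =>
    ⟨f ω (ξ ω), by rintro _ ⟨x, rfl⟩; exact hmin ω x⟩
  have hinf : ∀ ω, (⨅ x : EuclideanSpace ℝ (Fin n), f ω x) = f ω (ξ ω) :=
    fun ω => le_antisymm (ciInf_le (hbdd ω) (ξ ω)) (le_ciInf (hmin ω))
  set m : Ω → ℝ := fun ω => f ω (ξ ω) with hm
  -- a dense sequence
  set u : ℕ → EuclideanSpace ℝ (Fin n) := TopologicalSpace.denseSeq _ with hu
  have hud : DenseRange u := TopologicalSpace.denseRange_denseSeq _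
  -- approximation of the infimum along the dense sequence
  have happrox : ∀ ω, ∀ c : ℝ, 0 < c → ∃ j, f ω (u j) < m ω + c := by
    intro ω c hc
    have hopen : IsOpen {x : EuclideanSpace ℝ (Fin n) | f ω x < m ω + c} :=
      isOpen_lt (hfc ω).continuous continuous_const
    have hne : {x : EuclideanSpace ℝ (Fin n) | f ω x < m ω + c}.Nonempty :=
      ⟨ξ ω, by simp [hm]; linarith⟩
    exact hud.exists_mem_open hopen hne
  -- m is measurable
  have hm_eq : ∀ ω, (⨅ j : ℕ, f ω (u j)) = m ω := by
    intro ω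
    refine le_antisymm ?_ (le_ciInf fun j => hmin ω (u j))
    by_contra h
    push_neg at h
    obtain ⟨j, hj⟩ := happrox ω ((⨅ j : ℕ, f ω (u j)) - m ω) (by linarith)
    have : (⨅ j : ℕ, f ω (u j)) ≤ f ω (u j) :=
      ciInf_le ⟨m ω, by rintro _ ⟨i, rfl⟩; exact hmin ω (u i)⟩ j
    linarith
  have hm_meas : Measurable m := by
    have : m = fun ω => ⨅ j : ℕ, f ω (u j) := funext fun ω => (hm_eq ω).symm
    rw [this]
    exact Measurable.iInf fun j => hfm (u j)
  -- near-minimizing selections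
  have hex : ∀ k : ℕ, ∀ ω, ∃ j, f ω (u j) < m ω + 1 / (k + 1) := by
    intro k ω
    exact happrox ω _ (by positivity)
  set ψ : ℕ → Ω → EuclideanSpace ℝ (Fin n) := fun k ω => u (Nat.find (hex k ω)) with hψ
  have hψm : ∀ k, Measurable (ψ k) := by
    intro k
    exact measurable_from_top.comp
      (measurable_find (hex k)
        (fun j => measurableSet_lt (hfm (u j)) (hm_meas.add measurable_const)))
  have hψval : ∀ k ω, f ω (ψ k ω) < m ω + 1 / (k + 1) := fun k ω => Nat.find_spec (hex k ω)
  -- ψ k ω → ξ ω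
  have htend : ∀ ω, Filter.Tendsto (fun k => ψ k ω) Filter.atTop (𝓝 (ξ ω)) := by
    intro ω
    rw [Metric.tendsto_atTop]
    intro ε hε
    obtain ⟨η, hη, hco⟩ := F_coercive (hfc ω) (ha ω) (hpsd ω) (hξ ω).2 hε
    obtain ⟨K, hK⟩ := exists_nat_one_div_lt hη
    refine ⟨K, fun k hk => ?_⟩
    have h1 : (1:ℝ) / (k + 1) ≤ 1 / (K + 1) := by
      apply one_div_le_one_div_of_le
      · positivity
      · have := (Nat.cast_le (α := ℝ)).mpr hk; linarith
    have : f ω (ψ k ω) < m ω + η := lt_of_lt_of_le (hψval k ω) (by linarith)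
    exact hco _ this
  -- ξ is measurable as a pointwise limit of measurable functions
  have hξmeas : Measurable ξ :=
    measurable_of_tendsto_metrizable hψm (tendsto_pi_nhds.2 htend)
  exact ⟨ξ, hξmeas, fun ω => (hinf ω).symm⟩
end
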